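/- arXiv:2509.24143 — 4 statements merged into one kernel-verified Lean document; each statement's English description precedes it below -/
import Mathlib

section
/- Let κ_g, κ_n be real constants with K := √(κ_n² + κ_g²) > 0. Define the curve X(φ) = ((sin φ)/K, κ_g(1 − cos φ)/K², κ_n(1 − cos φ)/K²) for φ ∈ ℝ. If κ_n = 1/R with R > 0, then for all φ and all κ_g, the point X(φ) lies on the sphere of radius R centered at (0, 0, R), i.e., ‖X(φ) − (0,0,R)‖² = R². -/
noncomputable def v3 (a b c : ℝ) : EuclideanSpace ℝ (Fin 3) := WithLp.toLp 2 ![a, b, c]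

/-- Segments with maximal pitch rate `κ_n = 1/R` lie on a sphere of radius `R`
centered at `(0, 0, R)`, for any yaw rate `κ_g`. -/
theorem pitch_sphere (κg κn R : ℝ) (hR : 0 < R) (hκn : κn = 1 / R)
    (K : ℝ) (hK : K = Real.sqrt (κn ^ 2 + κg ^ 2)) (hKpos : 0 < K)
    (X : ℝ → EuclideanSpace ℝ (Fin 3))
    (hX : ∀ φ : ℝ, X φ =
      v3 (Real.sin φ / K) (κg * (1 - Real.cos φ) / K ^ 2) (κn * (1 - Real.cos φ) / K ^ 2)) :
    ∀ φ : ℝ, ‖X φ - v3 0 0 R‖ ^ 2 = R ^ 2 := by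
  intro φ
  have hK2 : K ^ 2 = κn ^ 2 + κg ^ 2 := by
    rw [hK, Real.sq_sqrt (by positivity)]
  have hKne : K ≠ 0 := ne_of_gt hKpos
  have hRκn : R * κn = 1 := by rw [hκn]; field_simp
  have hsin : Real.sin φ ^ 2 = 1 - Real.cos φ ^ 2 := by
    have := Real.sin_sq_add_cos_sq φ; linarith
  rw [hX φ]
  rw [EuclideanSpace.norm_eq, Real.sq_sqrt (by positivity)]
  have : ∀ i, (v3 (Real.sin φ / K) (κg * (1 - Real.cos φ) / K ^ 2)
      (κn * (1 - Real.cos φ) / K ^ 2) - v3 0 0 R) i =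
      ![Real.sin φ / K, κg * (1 - Real.cos φ) / K ^ 2,
        κn * (1 - Real.cos φ) / K ^ 2 - R] i := by
    intro i
    fin_cases i <;> simp [v3] <;> rfl
  rw [Fin.sum_univ_three, this 0, this 1, this 2]
  simp only [Matrix.cons_val_zero, Matrix.cons_val_one, Matrix.head_cons,
    Matrix.cons_val_two, Matrix.tail_cons]
  have h1 : |Real.sin φ / K| ^ 2 = Real.sin φ ^ 2 / K ^ 2 := by
    rw [sq_abs]; ring
  have h2 : |κg * (1 - Real.cos φ) / K ^ 2| ^ 2 = κg ^ 2 * (1 - Real.cos φ) ^ 2 / K ^ 4 := by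
    rw [sq_abs]; ring
  have h3 : |κn * (1 - Real.cos φ) / K ^ 2 - R| ^ 2 =
      (κn * (1 - Real.cos φ) / K ^ 2 - R) ^ 2 := sq_abs _
  simp only [Real.norm_eq_abs]
  rw [h1, h2, h3]
  have hκg2 : κg ^ 2 = K ^ 2 - κn ^ 2 := by linarith
  field_simp
  linear_combination K ^ 2 * hsin + (1 - Real.cos φ) ^ 2 * hκg2 -
    2 * (1 - Real.cos φ) * K ^ 2 * hRκn
end

section
/- Let X_sp, T_sp, N_sp : ℝ → ℝ³ satisfy dX_sp/ds = T_sp, dT_sp/ds = −(1/R̄²) X_sp + u_g N_sp, dN_sp/ds = −u_g T_sp, where u_g : ℝ → ℝ is continuous and R̄ > 0. If ‖X_sp(0)‖ = R̄, then ‖X_sp(s)‖ = R̄ for all s, i.e., the curve remains on the sphere of radius R̄ centered at the origin. -/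
open scoped InnerProductSpace

noncomputable def cross3 (p q : EuclideanSpace ℝ (Fin 3)) : EuclideanSpace ℝ (Fin 3) :=
  v3 (p 1 * q 2 - p 2 * q 1) (p 2 * q 0 - p 0 * q 2) (p 0 * q 1 - p 1 * q 0)

lemma inner3 (p q : EuclideanSpace ℝ (Fin 3)) :
    ⟪p, q⟫_ℝ = p 0 * q 0 + p 1 * q 1 + p 2 * q 2 := by
  simp [PiLp.inner_apply, Fin.sum_univ_three, RCLike.inner_apply, mul_comm]

lemma cross3_apply0 (p q : EuclideanSpace ℝ (Fin 3)) :
    cross3 p q 0 = p 1 * q 2 - p 2 * q 1 := by simp [cross3, v3]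
lemma cross3_apply1 (p q : EuclideanSpace ℝ (Fin 3)) :
    cross3 p q 1 = p 2 * q 0 - p 0 * q 2 := by simp [cross3, v3]
lemma cross3_apply2 (p q : EuclideanSpace ℝ (Fin 3)) :
    cross3 p q 2 = p 0 * q 1 - p 1 * q 0 := by simp [cross3, v3]

lemma lin_bound (c1 c2 c3 a1 a2 a3 d : ℝ) (h1 : |a1| ≤ d) (h2 : |a2| ≤ d) (h3 : |a3| ≤ d) :
    |c1 * a1 + c2 * a2 + c3 * a3| ≤ (|c1| + |c2| + |c3|) * d := by
  calc |c1 * a1 + c2 * a2 + c3 * a3| ≤ |c1 * a1| + |c2 * a2| + |c3 * a3| := abs_add_three _ _ _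
    _ ≤ (|c1| + |c2| + |c3|) * d := by
        rw [abs_mul, abs_mul, abs_mul]
        nlinarith [abs_nonneg c1, abs_nonneg c2, abs_nonneg c3, abs_nonneg a1, abs_nonneg a2,
          abs_nonneg a3]

/-- Solutions of the generalized Sabban frame equations on the sphere of radius
`R̄` remain on that sphere: `‖X_sp(s)‖ = R̄` for all `s`. -/
theorem sabban_stays_on_sphere (Rb : ℝ) (hRb : 0 < Rb)
    (X T N : ℝ → EuclideanSpace ℝ (Fin 3)) (ug : ℝ → ℝ) (hug : Continuous ug)
    (hX : ∀ s : ℝ, HasDerivAt X (T s) s)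
    (hT : ∀ s : ℝ, HasDerivAt T (-(1 / Rb ^ 2) • X s + ug s • N s) s)
    (hN : ∀ s : ℝ, HasDerivAt N (-(ug s) • T s) s)
    (hX0 : ‖X 0‖ = Rb) (hT0 : ‖T 0‖ = 1) (hXT0 : ⟪X 0, T 0⟫_ℝ = 0)
    (hN0 : N 0 = (1 / Rb) • cross3 (X 0) (T 0)) :
    ∀ s : ℝ, ‖X s‖ = Rb := by
  intro s₀
  set k : ℝ := 1 / Rb ^ 2 with hk_def
  have hk : 0 ≤ k := by positivity
  set B : ℝ := |s₀| + 1 with hB_def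
  have hB0 : 0 < B := by positivity
  -- clamped ug
  set cl : ℝ → ℝ := fun t => max (-B) (min t B) with hcl_def
  have hcl_mem : ∀ t, cl t ∈ Set.Icc (-B) B := by
    intro t
    constructor
    · exact le_max_left _ _
    · simp only [hcl_def, max_le_iff, min_le_iff]
      exact ⟨by linarith, Or.inr le_rfl⟩
  have hcl_eq : ∀ t ∈ Set.Ioo (-B) B, cl t = t := by
    intro t ht
    simp only [hcl_def]
    rw [min_eq_left ht.2.le, max_eq_right ht.1.le]
  set u : ℝ → ℝ := fun t => ug (cl t) with hu_def
  obtain ⟨M, hM⟩ := (isCompact_Icc (a := -B) (b := B)).exists_bound_of_continuousOn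
    hug.continuousOn
  set M' : ℝ := max M 0 with hM'_def
  have hM'0 : 0 ≤ M' := le_max_right _ _
  have hu_bd : ∀ t, |u t| ≤ M' := by
    intro t
    have := hM (cl t) (hcl_mem t)
    simp only [Real.norm_eq_abs] at this
    exact this.trans (le_max_left _ _)
  -- the Lipschitz constant
  have hKnn : 0 ≤ 2 + 2 * k + 2 * M' := by linarith
  set K : NNReal := ⟨2 + 2 * k + 2 * M', hKnn⟩ with hK_def
  have hKval : (K : ℝ) = 2 + 2 * k + 2 * M' := rfl
  -- the vector field
  set v : ℝ → (Fin 6 → ℝ) → (Fin 6 → ℝ) := fun t y =>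
    ![2 * y 1,
      y 3 - k * y 0 + u t * y 2,
      y 4 - u t * y 1,
      -(2 * k) * y 1 + (2 * u t) * y 4,
      -(k * y 2) + u t * y 5 - u t * y 3,
      -(2 * u t) * y 4] with hv_def
  have hlip : ∀ t, LipschitzWith K (v t) := by
    intro t
    apply LipschitzWith.of_dist_le_mul
    intro x y
    rw [dist_pi_le_iff (by positivity)]
    have hd : ∀ j : Fin 6, |x j - y j| ≤ dist x y := by
      intro j
      have := dist_le_pi_dist x y j
      rwa [Real.dist_eq] at this
    have hdnn : 0 ≤ dist x y := dist_nonneg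
    have hub := hu_bd t
    intro i
    rw [Real.dist_eq]
    simp only [hv_def]
    fin_cases i
    · show |2 * x 1 - 2 * y 1| ≤ (K : ℝ) * dist x y
      have heq : 2 * x 1 - 2 * y 1
          = 2 * (x 1 - y 1) + 0 * (x 0 - y 0) + 0 * (x 2 - y 2) := by ring
      rw [heq]
      refine (lin_bound _ _ _ _ _ _ _ (hd 1) (hd 0) (hd 2)).trans ?_
      have hc : |(2:ℝ)| + |(0:ℝ)| + |(0:ℝ)| ≤ (K : ℝ) := by
        rw [hKval]; norm_num; linarith
      exact mul_le_mul_of_nonneg_right hc hdnn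
    · show |(x 3 - k * x 0 + u t * x 2) - (y 3 - k * y 0 + u t * y 2)| ≤ (K : ℝ) * dist x y
      have heq : (x 3 - k * x 0 + u t * x 2) - (y 3 - k * y 0 + u t * y 2)
          = 1 * (x 3 - y 3) + (-k) * (x 0 - y 0) + u t * (x 2 - y 2) := by ring
      rw [heq]
      refine (lin_bound _ _ _ _ _ _ _ (hd 3) (hd 0) (hd 2)).trans ?_
      have hc : |(1:ℝ)| + |(-k)| + |u t| ≤ (K : ℝ) := by
        rw [abs_one, abs_neg, abs_of_nonneg hk, hKval]; linarith
      exact mul_le_mul_of_nonneg_right hc hdnn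
    · show |(x 4 - u t * x 1) - (y 4 - u t * y 1)| ≤ (K : ℝ) * dist x y
      have heq : (x 4 - u t * x 1) - (y 4 - u t * y 1)
          = 1 * (x 4 - y 4) + (-(u t)) * (x 1 - y 1) + 0 * (x 0 - y 0) := by ring
      rw [heq]
      refine (lin_bound _ _ _ _ _ _ _ (hd 4) (hd 1) (hd 0)).trans ?_
      have hc : |(1:ℝ)| + |(-(u t))| + |(0:ℝ)| ≤ (K : ℝ) := by
        rw [abs_one, abs_neg, abs_zero, hKval]; linarith
      exact mul_le_mul_of_nonneg_right hc hdnn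
    · show |(-(2 * k) * x 1 + (2 * u t) * x 4) - (-(2 * k) * y 1 + (2 * u t) * y 4)|
          ≤ (K : ℝ) * dist x y
      have heq : (-(2 * k) * x 1 + (2 * u t) * x 4) - (-(2 * k) * y 1 + (2 * u t) * y 4)
          = (-(2 * k)) * (x 1 - y 1) + (2 * u t) * (x 4 - y 4) + 0 * (x 0 - y 0) := by ring
      rw [heq]
      refine (lin_bound _ _ _ _ _ _ _ (hd 1) (hd 4) (hd 0)).trans ?_
      have hc : |(-(2 * k))| + |2 * u t| + |(0:ℝ)| ≤ (K : ℝ) := by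
        rw [abs_neg, abs_zero, abs_mul, abs_mul, abs_of_nonneg (by norm_num : (0:ℝ) ≤ 2),
          abs_of_nonneg hk, hKval]
        linarith
      exact mul_le_mul_of_nonneg_right hc hdnn
    · show |(-(k * x 2) + u t * x 5 - u t * x 3) - (-(k * y 2) + u t * y 5 - u t * y 3)|
          ≤ (K : ℝ) * dist x y
      have heq : (-(k * x 2) + u t * x 5 - u t * x 3) - (-(k * y 2) + u t * y 5 - u t * y 3)
          = (-k) * (x 2 - y 2) + u t * (x 5 - y 5) + (-(u t)) * (x 3 - y 3) := by ring
      rw [heq]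
      refine (lin_bound _ _ _ _ _ _ _ (hd 2) (hd 5) (hd 3)).trans ?_
      have hc : |(-k)| + |u t| + |(-(u t))| ≤ (K : ℝ) := by
        rw [abs_neg, abs_neg, abs_of_nonneg hk, hKval]; linarith
      exact mul_le_mul_of_nonneg_right hc hdnn
    · show |(-(2 * u t) * x 4) - (-(2 * u t) * y 4)| ≤ (K : ℝ) * dist x y
      have heq : (-(2 * u t) * x 4) - (-(2 * u t) * y 4)
          = (-(2 * u t)) * (x 4 - y 4) + 0 * (x 0 - y 0) + 0 * (x 1 - y 1) := by ring
      rw [heq]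
      refine (lin_bound _ _ _ _ _ _ _ (hd 4) (hd 0) (hd 1)).trans ?_
      have hc : |(-(2 * u t))| + |(0:ℝ)| + |(0:ℝ)| ≤ (K : ℝ) := by
        rw [abs_neg, abs_zero, abs_mul, abs_of_nonneg (by norm_num : (0:ℝ) ≤ 2), hKval]
        linarith
      exact mul_le_mul_of_nonneg_right hc hdnn
  -- the two solutions
  set F : ℝ → (Fin 6 → ℝ) := fun t =>
    ![⟪X t, X t⟫_ℝ, ⟪X t, T t⟫_ℝ, ⟪X t, N t⟫_ℝ, ⟪T t, T t⟫_ℝ, ⟪T t, N t⟫_ℝ, ⟪N t, N t⟫_ℝ]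
    with hF_def
  set G : ℝ → (Fin 6 → ℝ) := fun _ => ![Rb ^ 2, 0, 0, 1, 0, 1] with hG_def
  have hXc : Continuous X := continuous_iff_continuousAt.2 fun t => (hX t).continuousAt
  have hTc : Continuous T := continuous_iff_continuousAt.2 fun t => (hT t).continuousAt
  have hNc : Continuous N := continuous_iff_continuousAt.2 fun t => (hN t).continuousAt
  have hFc : Continuous F := by
    apply continuous_pi
    intro i
    fin_cases i <;> simp only [hF_def] <;>
      first
      | exact (hXc.inner hXc)
      | exact (hXc.inner hTc)
      | exact (hXc.inner hNc)
      | exact (hTc.inner hTc)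
      | exact (hTc.inner hNc)
      | exact (hNc.inner hNc)
  have hF' : ∀ t ∈ Set.Ioo (-B) B, HasDerivAt F (v t (F t)) t := by
    intro t ht
    have hut : u t = ug t := by rw [hu_def]; simp only; rw [hcl_eq t ht]
    apply hasDerivAt_pi.2
    intro i
    fin_cases i
    · have h := (hX t).inner ℝ (hX t)
      convert h using 1
      show v t (F t) 0 = _
      simp only [hv_def, hF_def]
      show 2 * ⟪X t, T t⟫_ℝ = _
      rw [real_inner_comm (T t) (X t)]; ring
      rfl
      rfl
    · have h := (hX t).inner ℝ (hT t)
      convert h using 1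
      show v t (F t) 1 = _
      simp only [hv_def, hF_def]
      show ⟪T t, T t⟫_ℝ - k * ⟪X t, X t⟫_ℝ + u t * ⟪X t, N t⟫_ℝ = _
      rw [inner_add_right, real_inner_smul_right, real_inner_smul_right, hut]
      ring
      rfl
      rfl
    · have h := (hX t).inner ℝ (hN t)
      convert h using 1
      show v t (F t) 2 = _
      simp only [hv_def, hF_def]
      show ⟪T t, N t⟫_ℝ - u t * ⟪X t, T t⟫_ℝ = _
      rw [real_inner_smul_right, hut]
      ring
      rfl
      rfl
    · have h := (hT t).inner ℝ (hT t)
      convert h using 1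
      show v t (F t) 3 = _
      simp only [hv_def, hF_def]
      show -(2 * k) * ⟪X t, T t⟫_ℝ + (2 * u t) * ⟪T t, N t⟫_ℝ = _
      rw [inner_add_right, inner_add_left, real_inner_smul_right, real_inner_smul_right,
        real_inner_smul_left, real_inner_smul_left, real_inner_comm (X t) (T t),
        real_inner_comm (N t) (T t), hut]
      ring
      rfl
      rfl
    · have h := (hT t).inner ℝ (hN t)
      convert h using 1
      show v t (F t) 4 = _
      simp only [hv_def, hF_def]
      show -(k * ⟪X t, N t⟫_ℝ) + u t * ⟪N t, N t⟫_ℝ - u t * ⟪T t, T t⟫_ℝ = _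
      rw [real_inner_smul_right, inner_add_left, real_inner_smul_left, real_inner_smul_left,
        hut]
      ring
      rfl
      rfl
    · have h := (hN t).inner ℝ (hN t)
      convert h using 1
      show v t (F t) 5 = _
      simp only [hv_def, hF_def]
      show -(2 * u t) * ⟪T t, N t⟫_ℝ = _
      rw [real_inner_smul_right, real_inner_smul_left, real_inner_comm (T t) (N t), hut]
      ring
      rfl
      rfl
  have hG' : ∀ t ∈ Set.Ioo (-B) B, HasDerivAt G (v t (G t)) t := by
    intro t ht
    have : v t (G t) = 0 := by
      funext i
      fin_cases i <;> simp only [hv_def, hG_def] <;>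
        first
        | (show 2 * (0:ℝ) = 0; ring)
        | (show (1:ℝ) - k * Rb ^ 2 + u t * 0 = 0; rw [hk_def]; field_simp; ring)
        | (show (0:ℝ) - u t * 0 = 0; ring)
        | (show -(2 * k) * 0 + (2 * u t) * (0:ℝ) = 0; ring)
        | (show -(k * 0) + u t * 1 - u t * (1:ℝ) = 0; ring)
        | (show -(2 * u t) * (0:ℝ) = 0; ring)
    rw [this]
    exact hasDerivAt_const t _
  have hF0 : F 0 = G 0 := by
    have hXX0 : ⟪X 0, X 0⟫_ℝ = Rb ^ 2 := by
      rw [real_inner_self_eq_norm_sq, hX0]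
    have hTT0 : ⟪T 0, T 0⟫_ℝ = 1 := by
      rw [real_inner_self_eq_norm_sq, hT0]; norm_num
    have hc0 := cross3_apply0 (X 0) (T 0)
    have hc1 := cross3_apply1 (X 0) (T 0)
    have hc2 := cross3_apply2 (X 0) (T 0)
    have hN0c : ∀ j : Fin 3, N 0 j = (1 / Rb) * cross3 (X 0) (T 0) j := by
      intro j
      rw [hN0]
      rfl
    have hXi := inner3 (X 0) (X 0)
    have hTi := inner3 (T 0) (T 0)
    have hXTi := inner3 (X 0) (T 0)
    funext i
    fin_cases i
    · show ⟪X 0, X 0⟫_ℝ = Rb ^ 2; exact hXX0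
    · show ⟪X 0, T 0⟫_ℝ = 0; exact hXT0
    · show ⟪X 0, N 0⟫_ℝ = 0
      rw [inner3, hN0c 0, hN0c 1, hN0c 2, hc0, hc1, hc2]
      ring
    · show ⟪T 0, T 0⟫_ℝ = 1; exact hTT0
    · show ⟪T 0, N 0⟫_ℝ = 0
      rw [inner3, hN0c 0, hN0c 1, hN0c 2, hc0, hc1, hc2]
      ring
    · show ⟪N 0, N 0⟫_ℝ = 1
      rw [inner3, hN0c 0, hN0c 1, hN0c 2, hc0, hc1, hc2]
      rw [hXi] at hXX0
      rw [hTi] at hTT0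
      rw [hXTi] at hXT0
      have hRb' : Rb ≠ 0 := ne_of_gt hRb
      field_simp
      linear_combination (T 0 0 ^ 2 + T 0 1 ^ 2 + T 0 2 ^ 2) * hXX0 + Rb ^ 2 * hTT0 +
        (- X 0 0 * T 0 0 - X 0 1 * T 0 1 - X 0 2 * T 0 2) * hXT0
  have h0mem : (0 : ℝ) ∈ Set.Ioo (-B) B := ⟨by linarith, by linarith⟩
  have heqon := ODE_solution_unique_of_mem_Icc (s := fun _ => (Set.univ : Set (Fin 6 → ℝ)))
    (fun t _ => (hlip t).lipschitzOnWith) h0mem hFc.continuousOn hF'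
    (fun _ _ => Set.mem_univ _) continuous_const.continuousOn hG'
    (fun _ _ => Set.mem_univ _) hF0
  have hs₀ : s₀ ∈ Set.Icc (-B) B := by
    constructor
    · have := neg_abs_le s₀; linarith
    · have := le_abs_self s₀; linarith
  have hFs := congrFun (heqon hs₀) 0
  have hXXs : ⟪X s₀, X s₀⟫_ℝ = Rb ^ 2 := hFs
  rw [real_inner_self_eq_norm_sq] at hXXs
  nlinarith [norm_nonneg (X s₀)]
end

section
/- Let r_i, r_f ∈ ℝ³ with d := ‖r_f − r_i‖ satisfying 2R̄ ≤ d, and let α = arccos(2R̄/d). Set k = (r_f − r_i)/d, A = r_i + R̄ cos(α) k, and B = r_f − R̄ cos(α) k. Let x, y be unit vectors with {x, y, k} orthonormal. For θ ∈ ℝ define X_ic(θ) = A + R̄ sin α (cos θ x + sin θ y) and X_oc(θ) = B + R̄ sin α (cos(θ+π) x + sin(θ+π) y). Then ‖X_ic(θ) − r_i‖ = R̄, ‖X_oc(θ) − r_f‖ = R̄, and the vector X_oc(θ) − X_ic(θ) is orthogonal to both X_ic(θ) − r_i and X_oc(θ) − r_f. -/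
open scoped InnerProductSpace

/-- The tangency points `X_ic(θ)`, `X_oc(θ)` of the cross-tangent plane lie on
the respective spheres of radius `R̄`, and the chord joining them is orthogonal
to both radius vectors at the tangency points. -/
theorem cross_tangent_points (Rb : ℝ) (hRb : 0 < Rb)
    (ri rf : EuclideanSpace ℝ (Fin 3)) (d : ℝ) (hd : d = ‖rf - ri‖)
    (hdist : 2 * Rb ≤ d)
    (α : ℝ) (hα : α = Real.arccos (2 * Rb / d))
    (k x y : EuclideanSpace ℝ (Fin 3))
    (hk : k = (1 / d) • (rf - ri))
    (hx : ‖x‖ = 1) (hy : ‖y‖ = 1)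
    (hxy : ⟪x, y⟫_ℝ = 0) (hxk : ⟪x, k⟫_ℝ = 0) (hyk : ⟪y, k⟫_ℝ = 0)
    (A B : EuclideanSpace ℝ (Fin 3))
    (hA : A = ri + (Rb * Real.cos α) • k) (hB : B = rf - (Rb * Real.cos α) • k)
    (Xic Xoc : ℝ → EuclideanSpace ℝ (Fin 3))
    (hXic : ∀ θ : ℝ, Xic θ =
      A + (Rb * Real.sin α * Real.cos θ) • x + (Rb * Real.sin α * Real.sin θ) • y)
    (hXoc : ∀ θ : ℝ, Xoc θ =
      B + (Rb * Real.sin α * Real.cos (θ + Real.pi)) • x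
        + (Rb * Real.sin α * Real.sin (θ + Real.pi)) • y) :
    ∀ θ : ℝ, ‖Xic θ - ri‖ = Rb ∧ ‖Xoc θ - rf‖ = Rb ∧
      ⟪Xoc θ - Xic θ, Xic θ - ri⟫_ℝ = 0 ∧ ⟪Xoc θ - Xic θ, Xoc θ - rf⟫_ℝ = 0 := by
  have hd0 : 0 < d := lt_of_lt_of_le (by linarith) hdist
  have hk1 : ⟪k, k⟫_ℝ = 1 := by
    have hnk : ‖k‖ = 1 := by
      rw [hk, norm_smul, ← hd]
      simp [abs_of_pos hd0]
      field_simp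
    rw [real_inner_self_eq_norm_sq, hnk]; norm_num
  have hcos : Real.cos α = 2 * Rb / d := by
    rw [hα, Real.cos_arccos]
    · have : 0 ≤ 2 * Rb / d := by positivity
      linarith
    · rw [div_le_one hd0]; exact hdist
  have hsc : Real.sin α ^ 2 + Real.cos α ^ 2 = 1 := Real.sin_sq_add_cos_sq α
  have hrfri : rf - ri = d • k := by
    rw [hk, smul_smul]
    field_simp
    rw [one_smul]
  intro θ
  have hv1 : Xic θ - ri = (Rb * Real.cos α) • k
      + (Rb * Real.sin α * Real.cos θ) • x + (Rb * Real.sin α * Real.sin θ) • y := by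
    rw [hXic, hA]; abel
  have hv2 : Xoc θ - rf = -(Xic θ - ri) := by
    rw [hXoc θ, hXic θ, hA, hB, Real.cos_add_pi, Real.sin_add_pi]
    module
  have hchord : Xoc θ - Xic θ = (d - 2 * (Rb * Real.cos α)) • k
      + (-(2 * (Rb * Real.sin α * Real.cos θ))) • x
      + (-(2 * (Rb * Real.sin α * Real.sin θ))) • y := by
    rw [hXoc θ, hXic θ, hA, hB, Real.cos_add_pi, Real.sin_add_pi, sub_smul, ← hrfri]
    module
  have hyx : ⟪y, x⟫_ℝ = 0 := by rw [real_inner_comm]; exact hxy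
  have hkx : ⟪k, x⟫_ℝ = 0 := by rw [real_inner_comm]; exact hxk
  have hky : ⟪k, y⟫_ℝ = 0 := by rw [real_inner_comm]; exact hyk
  have hxx : ⟪x, x⟫_ℝ = 1 := by rw [real_inner_self_eq_norm_sq, hx]; norm_num
  have hyy : ⟪y, y⟫_ℝ = 1 := by rw [real_inner_self_eq_norm_sq, hy]; norm_num
  have hinner1 : ⟪Xic θ - ri, Xic θ - ri⟫_ℝ = Rb ^ 2 := by
    rw [hv1]
    simp only [inner_add_left, inner_add_right, real_inner_smul_left,
      real_inner_smul_right, hk1, hxy, hxk, hyk, hyx, hkx, hky, hxx, hyy]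
    linear_combination Rb^2 * Real.sin α^2 * (Real.sin_sq_add_cos_sq θ) + Rb^2 * hsc
  have hn1 : ‖Xic θ - ri‖ = Rb := by
    have := real_inner_self_eq_norm_sq (Xic θ - ri)
    nlinarith [norm_nonneg (Xic θ - ri)]
  have horth : ⟪Xoc θ - Xic θ, Xic θ - ri⟫_ℝ = 0 := by
    rw [hchord, hv1]
    simp only [inner_add_left, inner_add_right, real_inner_smul_left,
      real_inner_smul_right, hk1, hxy, hxk, hyk, hyx, hkx, hky, hxx, hyy]
    have hcd : d * Real.cos α = 2 * Rb := by rw [hcos]; field_simp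
    linear_combination Rb * hcd - 2*Rb^2*Real.sin α^2 * (Real.sin_sq_add_cos_sq θ) - 2*Rb^2 * hsc
  refine ⟨hn1, ?_, horth, ?_⟩
  · rw [hv2, norm_neg]; exact hn1
  · rw [hv2, inner_neg_right, horth, neg_zero]
end

section
/- Let κ_g, κ_n be constants with κ_g = 1/R_y (R_y > 0), and κ_n ∈ [−1/R_p, 1/R_p] arbitrary. Then the curve X(φ) = ((sin φ)/K, κ_g(1 − cos φ)/K², κ_n(1 − cos φ)/K²), K = √(κ_g² + κ_n²), lies on the sphere of radius R_y centered at (0, R_y, 0): ‖X(φ) − (0, R_y, 0)‖² = R_y² for all φ. -/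
lemma norm_v3_sq (a b c : ℝ) : ‖v3 a b c‖ ^ 2 = a ^ 2 + b ^ 2 + c ^ 2 := by
  rw [v3, EuclideanSpace.norm_eq, Real.sq_sqrt (by positivity)]
  simp [Fin.sum_univ_three, sq_abs]

lemma v3_sub (a b c d e f : ℝ) : v3 a b c - v3 d e f = v3 (a - d) (b - e) (c - f) := by
  ext i
  fin_cases i <;> simp [v3]

/-- Yaw analogue of the pitch-sphere lemma: segments with maximal geodesic
curvature `κ_g = 1/R_y` lie on the sphere of radius `R_y` centered at
`(0, R_y, 0)`, for any pitch rate `κ_n ∈ [−1/R_p, 1/R_p]`. -/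
theorem yaw_sphere (κg κn Ry Rp : ℝ) (hRy : 0 < Ry) (hRp : 0 < Rp)
    (hκg : κg = 1 / Ry) (hκn : κn ∈ Set.Icc (-(1 / Rp)) (1 / Rp))
    (K : ℝ) (hK : K = Real.sqrt (κg ^ 2 + κn ^ 2))
    (X : ℝ → EuclideanSpace ℝ (Fin 3))
    (hX : ∀ φ : ℝ, X φ =
      v3 (Real.sin φ / K) (κg * (1 - Real.cos φ) / K ^ 2) (κn * (1 - Real.cos φ) / K ^ 2)) :
    ∀ φ : ℝ, ‖X φ - v3 0 Ry 0‖ ^ 2 = Ry ^ 2 := by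
  intro φ
  have hκg0 : κg ≠ 0 := by rw [hκg]; positivity
  have hK2 : K ^ 2 = κg ^ 2 + κn ^ 2 := by
    rw [hK, Real.sq_sqrt (by positivity)]
  have hKne : K ≠ 0 := by
    intro h
    rw [h] at hK2
    have h1 : 0 < κg ^ 2 := by positivity
    nlinarith [sq_nonneg κn]
  have hs : Real.sin φ ^ 2 = 1 - Real.cos φ ^ 2 := by
    nlinarith [Real.sin_sq_add_cos_sq φ]
  rw [hX, v3_sub, norm_v3_sq]
  have hRyκg : Ry * κg = 1 := by rw [hκg]; field_simp
  field_simp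
  linear_combination K ^ 2 * hs - (1 - Real.cos φ) ^ 2 * hK2 -
    2 * (1 - Real.cos φ) * K ^ 2 * hRyκg
end
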